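/- The NormalHedge potential φ(t,R) = (1/√(t+1))·exp(R²/(2(t+1))), defined for t > −1 and R ≥ 0, satisfies the backward heat equation ∂φ/∂t + (1/2)·∂²φ/∂R² = 0 on its domain {(t,R) : t > −1, R > 0}. -/

import Mathlib

open Real

private lemma exp_sq_hasDeriv (s : ℝ) (hs : 0 < s) (x : ℝ) :
    HasDerivAt (fun r : ℝ => Real.exp (r ^ 2 / (2 * s)))
      (Real.exp (x ^ 2 / (2 * s)) * (x / s)) x := by
  have h1 : HasDerivAt (fun r : ℝ => r ^ 2 / (2 * s)) (x / s) x := by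
    have := (hasDerivAt_pow 2 x).div_const (2 * s)
    refine this.congr_deriv ?_
    field_simp
    ring
  have := h1.exp
  convert this using 1

private lemma first_deriv (s : ℝ) (hs : 0 < s) (x : ℝ) :
    HasDerivAt (fun r : ℝ => (1 / Real.sqrt s) * Real.exp (r ^ 2 / (2 * s)))
      ((1 / Real.sqrt s) * (Real.exp (x ^ 2 / (2 * s)) * (x / s))) x :=
  (exp_sq_hasDeriv s hs x).const_mul _

/-- The NormalHedge potential `φ(t,R) = (1/√(t+1))·exp(R²/(2(t+1)))` satisfies the
backward heat equation `∂φ/∂t + (1/2)·∂²φ/∂R² = 0` on `{t > −1, R > 0}`. -/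
theorem stmt_13 :
    ∀ t R : ℝ, -1 < t → 0 < R →
      deriv (fun t' => (1 / Real.sqrt (t' + 1)) * Real.exp (R ^ 2 / (2 * (t' + 1)))) t
        + (1 / 2) *
          deriv (deriv (fun r => (1 / Real.sqrt (t + 1)) * Real.exp (r ^ 2 / (2 * (t + 1))))) R
        = 0 := by
  intro t R ht hR
  set s : ℝ := t + 1 with hsdef
  have hs : 0 < s := by linarith
  have hsne : s ≠ 0 := ne_of_gt hs
  have hsq : Real.sqrt s ≠ 0 := ne_of_gt (Real.sqrt_pos.mpr hs)
  have hsq2 : Real.sqrt s ^ 2 = s := Real.sq_sqrt hs.le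
  -- t-derivative
  have hsqrt : HasDerivAt (fun t' : ℝ => Real.sqrt (t' + 1)) (1 / (2 * Real.sqrt s)) t := by
    have h0 : HasDerivAt (fun t' : ℝ => t' + 1) 1 t := (hasDerivAt_id t).add_const 1
    have := (Real.hasDerivAt_sqrt hsne).comp t h0
    exact this.congr_deriv (mul_one _)
  have hinvsqrt := (hasDerivAt_const t (1:ℝ)).div hsqrt hsq
  have hinner : HasDerivAt (fun t' : ℝ => R ^ 2 / (2 * (t' + 1)))
      (-(R ^ 2 / (2 * s ^ 2))) t := by
    have h0 : HasDerivAt (fun t' : ℝ => (t' + 1)) 1 t := (hasDerivAt_id t).add_const 1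
    have hinv : HasDerivAt (fun t' : ℝ => (t' + 1)⁻¹) (-(1 / s ^ 2)) t := by
      have h := h0.inv hsne
      refine h.congr_deriv ?_
      rw [hsdef]; ring
    have h2 := hinv.const_mul (R ^ 2 / 2)
    have e : (fun t' : ℝ => R ^ 2 / (2 * (t' + 1))) = fun y => R ^ 2 / 2 * (y + 1)⁻¹ := by
      funext t'
      rw [div_eq_mul_inv, div_eq_mul_inv, mul_inv]
      ring
    rw [e]
    refine h2.congr_deriv ?_
    ring
  have hexp_t : HasDerivAt (fun t' : ℝ => Real.exp (R ^ 2 / (2 * (t' + 1))))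
      (Real.exp (R ^ 2 / (2 * s)) * (-(R ^ 2 / (2 * s ^ 2)))) t := hinner.exp
  have hT := hinvsqrt.mul hexp_t
  -- R-derivatives
  have hd1 : deriv (fun r : ℝ => (1 / Real.sqrt s) * Real.exp (r ^ 2 / (2 * s)))
      = fun x => (1 / Real.sqrt s) * (Real.exp (x ^ 2 / (2 * s)) * (x / s)) := by
    funext x; exact (first_deriv s hs x).deriv
  have hd2 : HasDerivAt (fun x : ℝ => (1 / Real.sqrt s) * (Real.exp (x ^ 2 / (2 * s)) * (x / s)))
      ((1 / Real.sqrt s) * (Real.exp (R ^ 2 / (2 * s)) * (R / s) * (R / s)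
        + Real.exp (R ^ 2 / (2 * s)) * (1 / s))) R := by
    have hx : HasDerivAt (fun x : ℝ => x / s) (1 / s) R := (hasDerivAt_id R).div_const s
    have := ((exp_sq_hasDeriv s hs R).mul hx).const_mul (1 / Real.sqrt s)
    exact this
  rw [(show HasDerivAt (fun t' => (1 / Real.sqrt (t' + 1)) * Real.exp (R ^ 2 / (2 * (t' + 1)))) _ t from hT).deriv, hd1, hd2.deriv]
  simp only [Pi.div_apply, ← hsdef]
  field_simp
  rw [hsq2]
  ring
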